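/- Let α > −1, let q ≥ 0 be an integer, and let n ≥ 1 be an integer. Suppose G is a monic polynomial of degree 2n with real coefficients such that ∫_{−1}^{1} |x|^{2q+2} (1−x²)^{α+1} x^k G(x) dx = 0 for all integers 0 ≤ k ≤ 2n−1. Then the polynomial (1+x)G(x) of degree 2n+1 satisfies ∫_{−1}^{1} x^{2q+1} (1−x²)^α (1−x) x^k (1+x) G(x) dx = 0 for all integers 0 ≤ k ≤ 2n, while ∫_{−1}^{1} x^{2q+1} (1−x²)^α (1−x) x^{2n+1} (1+x) G(x) dx ≠ 0. -/

import Mathlib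

open MeasureTheory intervalIntegral Polynomial

namespace SGGaux

noncomputable def W (q : ℕ) (α : ℝ) (x : ℝ) : ℝ := |x| ^ (2*q+2) * (1 - x^2) ^ (α+1)

lemma contW (q : ℕ) {α : ℝ} (hα : -1 < α) : Continuous (W q α) := by
  unfold W
  exact (continuous_abs.pow _).mul
    ((Real.continuous_rpow_const (by linarith)).comp (by continuity))

lemma Wnonneg (q : ℕ) (α : ℝ) {x : ℝ} (hx : x ∈ Set.Icc (-1:ℝ) 1) : 0 ≤ W q α x := by
  have h : (0:ℝ) ≤ 1 - x^2 := by nlinarith [hx.1, hx.2]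
  exact mul_nonneg (pow_nonneg (abs_nonneg _) _) (Real.rpow_nonneg h _)

lemma Jpos (q : ℕ) {α : ℝ} (hα : -1 < α) {P : ℝ[X]} (hP : P ≠ 0) :
    0 < ∫ x in (-1:ℝ)..1, W q α x * (P*P).eval x := by
  obtain ⟨c, hc, hcr⟩ := ((Set.Ioo_infinite (by norm_num : (0:ℝ) < 1)).diff
    (P.finite_setOf_isRoot hP)).nonempty
  apply intervalIntegral.integral_pos (by norm_num)
  · exact ((contW q hα).mul (P*P).continuous).continuousOn
  · intro x hx
    have h1 := Wnonneg q α (Set.mem_Icc.mpr ⟨le_of_lt hx.1, hx.2⟩)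
    simp only [eval_mul]
    nlinarith [sq_nonneg (P.eval x), sq_abs (P.eval x)]
  · refine ⟨c, ⟨by linarith [hc.1], le_of_lt hc.2⟩, ?_⟩
    have hc0 : (0:ℝ) < c := hc.1
    have hW : 0 < W q α c := by
      have h2 : (0:ℝ) < 1 - c^2 := by nlinarith [hc.2]
      exact mul_pos (pow_pos (abs_pos.mpr (ne_of_gt hc0)) _) (Real.rpow_pos_of_pos h2 _)
    have hPc : P.eval c ≠ 0 := hcr
    simp only [eval_mul]
    exact mul_pos hW (mul_self_pos.mpr hPc)

lemma odd_integral {f : ℝ → ℝ} (h : ∀ x, f (-x) = - f x) :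
    ∫ x in (-1:ℝ)..1, f x = 0 := by
  have h1 : (∫ x in (-1:ℝ)..1, f (-x)) = ∫ x in (-1:ℝ)..1, f x := by
    rw [intervalIntegral.integral_comp_neg]; norm_num
  have h2 : (∫ x in (-1:ℝ)..1, f (-x)) = -∫ x in (-1:ℝ)..1, f x := by
    simp_rw [h]; exact intervalIntegral.integral_neg
  linarith

lemma keyId {α : ℝ} (hα : -1 < α) {x : ℝ} (hx : x ∈ Set.Icc (-1:ℝ) 1) :
    (1 - x^2) ^ α * (1-x) * (1+x) = (1 - x^2) ^ (α+1) := by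
  rcases eq_or_lt_of_le hx.1 with h1 | h1
  · rw [← h1]; norm_num [Real.zero_rpow (show α + 1 ≠ 0 by linarith)]
  rcases eq_or_lt_of_le hx.2 with h2 | h2
  · rw [h2]; norm_num [Real.zero_rpow (show α + 1 ≠ 0 by linarith)]
  have hpos : (0:ℝ) < 1 - x^2 := by nlinarith
  rw [Real.rpow_add_one (ne_of_gt hpos)]
  ring

lemma Jpoly (q n : ℕ) {α : ℝ} (hα : -1 < α) (F : ℝ[X])
    (hF : ∀ k : ℕ, k < 2*n → ∫ x in (-1:ℝ)..1, W q α x * (x^k * F.eval x) = 0)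
    (P : ℝ[X]) (hP : P.natDegree < 2*n) :
    (∫ x in (-1:ℝ)..1, W q α x * (P*F).eval x) = 0 := by
  have heq : (fun x => W q α x * (P*F).eval x)
      = fun x => ∑ i ∈ Finset.range (2*n), P.coeff i * (W q α x * (x ^ i * F.eval x)) := by
    funext x
    rw [eval_mul, eval_eq_sum_range' hP, Finset.sum_mul, Finset.mul_sum]
    exact Finset.sum_congr rfl fun i _ => by ring
  rw [heq, intervalIntegral.integral_finset_sum]
  · exact Finset.sum_eq_zero fun i hi => by
      rw [intervalIntegral.integral_const_mul, hF i (Finset.mem_range.mp hi), mul_zero]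
  · intro i _
    exact (continuous_const.mul ((contW q hα).mul
      ((continuous_pow i).mul F.continuous))).intervalIntegrable _ _

end SGGaux

/-- If `G` is the monic generalized Gegenbauer polynomial of degree `2n` for the weight
`|x|^{2q+2}(1−x²)^{α+1}`, then `(1+x)G(x)` is orthogonal to `x^k`, `0 ≤ k ≤ 2n`, with respect
to the signed weight `x^{2q+1}(1−x²)^α(1−x)`, while its moment of order `2n+1` is nonzero. -/
theorem shifted_gg_orthogonal_signed_weight (α : ℝ) (hα : -1 < α) (q : ℕ) (n : ℕ) (hn : 1 ≤ n)
    (G : Polynomial ℝ) (hGm : G.Monic) (hGd : G.natDegree = 2 * n)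
    (hG : ∀ k : ℕ, k < 2 * n →
      ∫ x in (-1 : ℝ)..1, |x| ^ (2 * q + 2) * (1 - x ^ 2) ^ (α + 1) * x ^ k * G.eval x = 0) :
    (∀ k : ℕ, k < 2 * n + 1 →
      ∫ x in (-1 : ℝ)..1,
        x ^ (2 * q + 1) * (1 - x ^ 2) ^ α * (1 - x) * x ^ k * ((1 + x) * G.eval x) = 0) ∧
    (∫ x in (-1 : ℝ)..1,
        x ^ (2 * q + 1) * (1 - x ^ 2) ^ α * (1 - x) * x ^ (2 * n + 1) * ((1 + x) * G.eval x))
      ≠ 0 := by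
  have huIcc : Set.uIcc (-1:ℝ) 1 = Set.Icc (-1:ℝ) 1 := Set.uIcc_of_le (by norm_num)
  -- reformulate hG
  have hGW : ∀ k : ℕ, k < 2*n →
      (∫ x in (-1:ℝ)..1, SGGaux.W q α x * (x^k * G.eval x)) = 0 := by
    intro k hk
    rw [← hG k hk]
    apply intervalIntegral.integral_congr
    intro x _
    simp only [SGGaux.W]; ring
  -- the reflected polynomial
  set H : Polynomial ℝ := G.comp (-X) with hH
  have hHeval : ∀ x : ℝ, H.eval x = G.eval (-x) := fun x => by simp [hH, eval_comp]
  have hHW : ∀ k : ℕ, k < 2*n →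
      (∫ x in (-1:ℝ)..1, SGGaux.W q α x * (x^k * H.eval x)) = 0 := by
    intro k hk
    have hsub : (∫ x in (-1:ℝ)..1, (fun y => SGGaux.W q α y * (y^k * G.eval y)) (-x))
        = ∫ x in (-1:ℝ)..1, SGGaux.W q α x * (x^k * G.eval x) := by
      rw [intervalIntegral.integral_comp_neg (f := fun y => SGGaux.W q α y * (y^k * G.eval y))]
      norm_num
    have heq : ∀ x : ℝ, (fun y => SGGaux.W q α y * (y^k * G.eval y)) (-x)
        = (-1:ℝ)^k * (SGGaux.W q α x * (x^k * H.eval x)) := by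
      intro x
      have hWx : SGGaux.W q α (-x) = SGGaux.W q α x := by
        simp only [SGGaux.W, abs_neg, neg_sq]
      show SGGaux.W q α (-x) * ((-x)^k * G.eval (-x)) = _
      rw [hWx, ← hHeval x, neg_pow]
      ring
    have hmain : ((-1:ℝ)^k) * (∫ x in (-1:ℝ)..1, SGGaux.W q α x * (x^k * H.eval x)) = 0 := by
      rw [← intervalIntegral.integral_const_mul]
      calc (∫ x in (-1:ℝ)..1, (-1:ℝ)^k * (SGGaux.W q α x * (x^k * H.eval x)))
          = ∫ x in (-1:ℝ)..1, (fun y => SGGaux.W q α y * (y^k * G.eval y)) (-x) := by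
            apply intervalIntegral.integral_congr
            intro x _; exact (heq x).symm
        _ = 0 := by rw [hsub]; exact hGW k hk
    have hne : ((-1:ℝ)^k) ≠ 0 := pow_ne_zero _ (by norm_num)
    exact (mul_eq_zero.mp hmain).resolve_left hne
  -- G is even
  have hGH : G = H := by
    by_contra hne
    set D := G - H with hD
    have hD0 : D ≠ 0 := sub_ne_zero.mpr hne
    have hHnd : H.natDegree = 2*n := by
      rw [hH, natDegree_comp]; simp [hGd]
    have hHlc : H.leadingCoeff = 1 := by
      rw [hH, leadingCoeff_comp (by simp : (-X : Polynomial ℝ).natDegree ≠ 0)]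
      simp [hGm.leadingCoeff, hGd, pow_mul]
    have hH0 : H ≠ 0 := fun h => by simp [h] at hHlc
    have hdeg : D.natDegree < 2*n := by
      have h1 : degree G = degree H := by
        rw [degree_eq_natDegree hGm.ne_zero, degree_eq_natDegree hH0, hGd, hHnd]
      have h3 := degree_sub_lt h1 hGm.ne_zero (by rw [hGm.leadingCoeff, hHlc])
      rw [degree_eq_natDegree hGm.ne_zero, hGd] at h3
      exact (natDegree_lt_iff_degree_lt hD0).mpr h3
    have e1 := SGGaux.Jpoly q n hα G hGW D hdeg
    have e2 := SGGaux.Jpoly q n hα H hHW D hdeg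
    have e3 : (∫ x in (-1:ℝ)..1, SGGaux.W q α x * (D*D).eval x) = 0 := by
      have hfe : (fun x => SGGaux.W q α x * (D*D).eval x)
          = fun x => SGGaux.W q α x * (D*G).eval x - SGGaux.W q α x * (D*H).eval x := by
        funext x
        simp only [hD, eval_mul, eval_sub]
        ring
      rw [hfe, intervalIntegral.integral_sub, e1, e2, sub_zero]
      · exact ((SGGaux.contW q hα).mul (D*G).continuous).intervalIntegrable _ _
      · exact ((SGGaux.contW q hα).mul (D*H).continuous).intervalIntegrable _ _
    exact absurd e3 (ne_of_gt (SGGaux.Jpos q hα hD0))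
  have hGeven : ∀ x : ℝ, G.eval (-x) = G.eval x := fun x => by
    rw [← hHeval x, ← hGH]
  constructor
  · intro k hk
    match k with
    | 0 =>
      have hcongr : (∫ x in (-1:ℝ)..1,
            x ^ (2*q+1) * (1 - x^2)^α * (1-x) * x^0 * ((1+x) * G.eval x))
          = ∫ x in (-1:ℝ)..1, x^(2*q+1) * ((1 - x^2)^(α+1) * G.eval x) := by
        apply intervalIntegral.integral_congr
        intro x hx
        rw [huIcc] at hx
        have hkey := SGGaux.keyId hα hx
        calc x ^ (2*q+1) * (1 - x^2)^α * (1-x) * x^0 * ((1+x) * G.eval x)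
            = (x^(2*q+1) * x^0 * G.eval x) * ((1-x^2)^α * (1-x) * (1+x)) := by ring
          _ = x^(2*q+1) * ((1 - x^2)^(α+1) * G.eval x) := by rw [hkey]; ring
      rw [hcongr]
      apply SGGaux.odd_integral
      intro x
      have h2 : (1 - (-x)^2 : ℝ) = 1 - x^2 := by ring
      rw [h2, hGeven x, Odd.neg_pow ⟨q, by ring⟩]
      ring
    | (j+1) =>
      have hj : j < 2*n := by omega
      have hcongr : (∫ x in (-1:ℝ)..1,
            x ^ (2*q+1) * (1 - x^2)^α * (1-x) * x^(j+1) * ((1+x) * G.eval x))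
          = ∫ x in (-1:ℝ)..1, SGGaux.W q α x * (x^j * G.eval x) := by
        apply intervalIntegral.integral_congr
        intro x hx
        rw [huIcc] at hx
        have hkey := SGGaux.keyId hα hx
        have habs : |x| ^ (2*q+2) = x^(2*q+2) := Even.pow_abs ⟨q+1, by ring⟩ x
        calc x ^ (2*q+1) * (1 - x^2)^α * (1-x) * x^(j+1) * ((1+x) * G.eval x)
            = (x^(2*q+2) * (x^j * G.eval x)) * ((1-x^2)^α * (1-x) * (1+x)) := by ring
          _ = SGGaux.W q α x * (x^j * G.eval x) := by
              rw [hkey, ← habs]; simp only [SGGaux.W]; ring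
      rw [hcongr]
      exact hGW j hj
  · have hcongr : (∫ x in (-1:ℝ)..1,
          x ^ (2*q+1) * (1 - x^2)^α * (1-x) * x^(2*n+1) * ((1+x) * G.eval x))
        = ∫ x in (-1:ℝ)..1, SGGaux.W q α x * ((X^(2*n) * G : Polynomial ℝ).eval x) := by
      apply intervalIntegral.integral_congr
      intro x hx
      rw [huIcc] at hx
      have hkey := SGGaux.keyId hα hx
      have habs : |x| ^ (2*q+2) = x^(2*q+2) := Even.pow_abs ⟨q+1, by ring⟩ x
      simp only [eval_mul, eval_pow, eval_X]
      calc x ^ (2*q+1) * (1 - x^2)^α * (1-x) * x^(2*n+1) * ((1+x) * G.eval x)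
          = (x^(2*q+2) * (x^(2*n) * G.eval x)) * ((1-x^2)^α * (1-x) * (1+x)) := by ring
        _ = SGGaux.W q α x * (x^(2*n) * G.eval x) := by
            rw [hkey, ← habs]; simp only [SGGaux.W]; ring
    rw [hcongr]
    have hd2 : (X^(2*n) - G : Polynomial ℝ).natDegree < 2*n := by
      by_cases h0 : (X^(2*n) - G : Polynomial ℝ) = 0
      · rw [h0]; simpa using (by omega : 0 < n)
      · have h1 : degree (X^(2*n) : Polynomial ℝ) = degree G := by
          rw [degree_eq_natDegree hGm.ne_zero, hGd, degree_X_pow]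
        have h3 := degree_sub_lt h1 (pow_ne_zero _ X_ne_zero)
          (by rw [leadingCoeff_X_pow, hGm.leadingCoeff])
        rw [degree_X_pow] at h3
        exact (natDegree_lt_iff_degree_lt h0).mpr h3
    have e0 := SGGaux.Jpoly q n hα G hGW (X^(2*n) - G) hd2
    have hfe : (fun x => SGGaux.W q α x * ((X^(2*n) * G : Polynomial ℝ).eval x))
        = fun x => SGGaux.W q α x * ((G*G).eval x)
            + SGGaux.W q α x * (((X^(2*n) - G) * G : Polynomial ℝ).eval x) := by
      funext x
      simp only [eval_mul, eval_sub, eval_pow, eval_X]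
      ring
    rw [hfe, intervalIntegral.integral_add (f := fun x => SGGaux.W q α x * ((G*G).eval x))
      (g := fun x => SGGaux.W q α x * (((X^(2*n) - G) * G : Polynomial ℝ).eval x))
      (((SGGaux.contW q hα).mul (G*G).continuous).intervalIntegrable _ _)
      (((SGGaux.contW q hα).mul ((X^(2*n) - G) * G : Polynomial ℝ).continuous).intervalIntegrable _ _),
      e0, add_zero]
    exact ne_of_gt (SGGaux.Jpos q hα hGm.ne_zero)
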